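/- For a nonempty topological space X, the following are equivalent: (a) X is a continuous open image of a π-space; (b) X is a continuous open image of a space Y for which there exist a Polish space P and a continuous quasi-open bijection from Y onto P. -/

import Mathlib

open Set Topology

namespace PiSpacePaper

/-- The restriction `p↾n` of `p : ℕ → ℕ`, as a list of length `n`. -/
def restrictSeq (p : ℕ → ℕ) (n : ℕ) : List ℕ := (List.range n).map p

/-- The basic clopen set `S_a` of the Baire space. -/
def cyl (a : List ℕ) : Set (ℕ → ℕ) := {p | restrictSeq p a.length = a}

/-- The fruit `⋂ n, V (p↾n)` of a branch `p` in a Souslin scheme `V`. -/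
def fruit {X : Type*} (V : List ℕ → Set X) (p : ℕ → ℕ) : Set X :=
  ⋂ n : ℕ, V (restrictSeq p n)

/-- A Souslin scheme `V` covers the set `s`. -/
def Covers {X : Type*} (V : List ℕ → Set X) (s : Set X) : Prop :=
  V [] = s ∧ ∀ a : List ℕ, V a = ⋃ n : ℕ, V (a ++ [n])

/-- A Souslin scheme `V` partitions the set `s`. -/
def Partitions {X : Type*} (V : List ℕ → Set X) (s : Set X) : Prop :=
  Covers V s ∧ ∀ (a : List ℕ) (n m : ℕ), n ≠ m → V (a ++ [n]) ∩ V (a ++ [m]) = ∅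

/-- A Souslin scheme is complete iff all fruits are nonempty. -/
def Complete {X : Type*} (V : List ℕ → Set X) : Prop :=
  ∀ p : ℕ → ℕ, (fruit V p).Nonempty

/-- A Souslin scheme has strict branches iff every fruit is a singleton. -/
def StrictBranches {X : Type*} (V : List ℕ → Set X) : Prop :=
  ∀ p : ℕ → ℕ, ∃ x : X, fruit V p = {x}

/-- A Souslin scheme is open iff all its members are open sets. -/
def OpenScheme {X : Type*} [TopologicalSpace X] (V : List ℕ → Set X) : Prop :=
  ∀ a : List ℕ, IsOpen (V a)

/-- `flesh V = ⋃ a, V a`. -/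
def flesh {X : Type*} (V : List ℕ → Set X) : Set X := ⋃ a : List ℕ, V a

/-- `branches V x = {q ∈ ℕ^ℕ : x ∈ fruit V q}`. -/
def branches {X : Type*} (V : List ℕ → Set X) (x : X) : Set (ℕ → ℕ) :=
  {q | x ∈ fruit V q}

/-- A family `γ` of subsets is a π-net for a space: all members are nonempty and every
nonempty open set contains a member. -/
def IsPiNet {X : Type*} [TopologicalSpace X] (γ : Set (Set X)) : Prop :=
  (∀ G ∈ γ, G.Nonempty) ∧
  ∀ U : Set X, IsOpen U → U.Nonempty → ∃ G ∈ γ, G ⊆ U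

/-- A family `γ` of subsets is a π-base for a space: all members are nonempty open sets
and every nonempty open set contains a member. -/
def IsPiBase {X : Type*} [TopologicalSpace X] (γ : Set (Set X)) : Prop :=
  (∀ G ∈ γ, IsOpen G ∧ G.Nonempty) ∧
  ∀ U : Set X, IsOpen U → U.Nonempty → ∃ G ∈ γ, G ⊆ U

/-- A π-space: there is an open Souslin scheme that partitions the space, has strict
branches, and whose family of members is a π-base. -/
def IsPiSpace (X : Type*) [TopologicalSpace X] : Prop :=
  ∃ V : List ℕ → Set X, OpenScheme V ∧ Partitions V Set.univ ∧ StrictBranches V ∧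
    IsPiBase {S : Set X | ∃ a : List ℕ, S = V a}

/-- A Lusin π-base for a space. -/
def IsLusinPiBase {X : Type*} [TopologicalSpace X] (V : List ℕ → Set X) : Prop :=
  OpenScheme V ∧ Partitions V Set.univ ∧ StrictBranches V ∧
  ∀ (x : X) (U : Set X), IsOpen U → x ∈ U →
    ∃ (a : List ℕ) (n : ℕ), x ∈ V a ∧ (⋃ i : ℕ, ⋃ _ : n ≤ i, V (a ++ [i])) ⊆ U

/-- A map is quasi-open iff the image of every nonempty open set has nonempty interior. -/
def IsQuasiOpen {X Y : Type*} [TopologicalSpace X] [TopologicalSpace Y] (f : X → Y) : Prop :=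
  ∀ U : Set X, IsOpen U → U.Nonempty → (interior (f '' U)).Nonempty

/-- A π-net Souslin scheme on a space `X`: for every finite sequence `a`, the family
`{V b : b ⊒ a}` is a π-net for the subspace `V a` of `X` (whose nonempty open sets are
exactly the nonempty sets `U ∩ V a` with `U` open in `X`). -/
def IsPiNetScheme {X : Type*} [TopologicalSpace X] (V : List ℕ → Set X) : Prop :=
  ∀ a : List ℕ,
    (∀ b : List ℕ, a <+: b → (V b).Nonempty) ∧
    ∀ U : Set X, IsOpen U → (U ∩ V a).Nonempty → ∃ b : List ℕ, a <+: b ∧ V b ⊆ U ∩ V a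

/-- A π-base Souslin scheme on a space is an open π-net Souslin scheme. -/
def IsPiBaseScheme {X : Type*} [TopologicalSpace X] (V : List ℕ → Set X) : Prop :=
  OpenScheme V ∧ IsPiNetScheme V

/-- A selector on a Souslin scheme `V`: a surjection of the Baire space onto `flesh V`
such that every fiber `f⁻¹(x)` is a dense subset of the subspace `branches V x` of the
Baire space. -/
def IsSelector {X : Type*} (V : List ℕ → Set X) (f : (ℕ → ℕ) → X) : Prop :=
  Set.range f = flesh V ∧
  ∀ x ∈ flesh V, f ⁻¹' {x} ⊆ branches V x ∧ branches V x ⊆ closure (f ⁻¹' {x})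

/-- The topology `σ_{τ,f}` on the Baire space, generated by the subbase consisting of the
`τ`-preimages under `f` together with the basic sets `S_a`. -/
def sigmaTop {X : Type*} [TopologicalSpace X] (f : (ℕ → ℕ) → X) :
    TopologicalSpace (ℕ → ℕ) :=
  TopologicalSpace.generateFrom
    ({S : Set (ℕ → ℕ) | ∃ U : Set X, IsOpen U ∧ S = f ⁻¹' U} ∪
      {S : Set (ℕ → ℕ) | ∃ a : List ℕ, S = cyl a})

/-- The Souslin scheme `V^g`, where `V^g_a = V_{g ∘ a}`. -/
def schemeComp {X : Type*} (V : List ℕ → Set X) (g : ℕ → ℕ) : List ℕ → Set X :=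
  fun a => V (a.map g)

/-- A subset of the Baire space is dense-in-itself iff it has no isolated points. -/
def DenseInItself (B : Set (ℕ → ℕ)) : Prop :=
  ∀ q ∈ B, q ∈ closure (B \ {q})

/-- `X` is a continuous open image of a π-space. -/
def IsContinuousOpenImageOfPiSpace (X : Type) [TopologicalSpace X] : Prop :=
  ∃ (Y : Type) (_ : TopologicalSpace Y) (f : Y → X),
    IsPiSpace Y ∧ Continuous f ∧ IsOpenMap f ∧ Function.Surjective f

/-- The topology `τ_N` on the Baire space generated by the sets `U \ A` with `U` open in
the Baire space and `A` nowhere dense in the Baire space. -/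
def tauN : TopologicalSpace (ℕ → ℕ) :=
  TopologicalSpace.generateFrom
    {S : Set (ℕ → ℕ) | ∃ U A : Set (ℕ → ℕ), IsOpen U ∧ IsNowhereDense A ∧ S = U \ A}


/-! ### Auxiliary lemmas -/

open Metric Filter Function

lemma restrictSeq_zero (p : ℕ → ℕ) : restrictSeq p 0 = [] := rfl

lemma restrictSeq_succ (p : ℕ → ℕ) (n : ℕ) :
    restrictSeq p (n+1) = restrictSeq p n ++ [p n] := by
  simp [restrictSeq, List.range_succ]

lemma length_restrictSeq (p : ℕ → ℕ) (n : ℕ) : (restrictSeq p n).length = n := by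
  simp [restrictSeq]

lemma restrictSeq_getElem (p : ℕ → ℕ) {n i : ℕ} (h : i < n) :
    (restrictSeq p n)[i]'(by simpa [length_restrictSeq] using h) = p i := by
  simp [restrictSeq]

lemma restrictSeq_eq_iff {p q : ℕ → ℕ} {n : ℕ} :
    restrictSeq p n = restrictSeq q n ↔ ∀ i < n, p i = q i := by
  constructor
  · intro h i hi
    have h1 := restrictSeq_getElem p hi
    have h2 := restrictSeq_getElem q hi
    rw [← h1, ← h2]
    simp only [h]
  · intro h
    apply List.ext_getElem (by simp [length_restrictSeq])
    intro i h1 h2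
    have hi : i < n := by simpa [length_restrictSeq] using h1
    rw [restrictSeq_getElem p hi, restrictSeq_getElem q hi]
    exact h i hi

lemma restrictSeq_take (p : ℕ → ℕ) {m n : ℕ} (h : m ≤ n) :
    (restrictSeq p n).take m = restrictSeq p m := by
  simp [restrictSeq, ← List.map_take, List.take_range, Nat.min_eq_left h]

def extFun (a : List ℕ) : ℕ → ℕ := fun i => a.getD i 0

lemma restrictSeq_extFun (a : List ℕ) : restrictSeq (extFun a) a.length = a := by
  apply List.ext_getElem (by simp [length_restrictSeq])
  intro i h1 h2
  rw [restrictSeq_getElem _ (by simpa [length_restrictSeq] using h1)]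
  simp [extFun, List.getD_eq_getElem?_getD, List.getElem?_eq_getElem h2]

lemma mem_cyl_restrictSeq (p : ℕ → ℕ) (n : ℕ) : p ∈ cyl (restrictSeq p n) := by
  simp [cyl, length_restrictSeq]

lemma cyl_restrictSeq_eq_cylinder (p : ℕ → ℕ) (n : ℕ) :
    cyl (restrictSeq p n) = PiNat.cylinder p n := by
  ext q
  simp only [cyl, mem_setOf_eq, PiNat.mem_cylinder_iff, length_restrictSeq]
  exact restrictSeq_eq_iff

lemma cyl_eq_cylinder (a : List ℕ) : cyl a = PiNat.cylinder (extFun a) a.length := by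
  have h := cyl_restrictSeq_eq_cylinder (extFun a) a.length
  rwa [restrictSeq_extFun] at h

lemma isOpen_cyl (a : List ℕ) : IsOpen (cyl a) := by
  rw [cyl_eq_cylinder]; exact PiNat.isOpen_cylinder _ _ _

lemma extFun_mem_cyl (a : List ℕ) : extFun a ∈ cyl a := by
  simp [cyl, restrictSeq_extFun]

lemma cyl_nonempty (a : List ℕ) : (cyl a).Nonempty := ⟨extFun a, extFun_mem_cyl a⟩

/-- basis property of cylinders -/
lemma cyl_basis {O : Set (ℕ → ℕ)} (hO : IsOpen O) {p : ℕ → ℕ} (hp : p ∈ O) :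
    ∃ n, cyl (restrictSeq p n) ⊆ O := by
  obtain ⟨v, ⟨x, n, rfl⟩, hxv, hvO⟩ :=
    (PiNat.isTopologicalBasis_cylinders (fun _ : ℕ => ℕ)).exists_subset_of_mem_open hp hO
  refine ⟨n, ?_⟩
  rw [cyl_restrictSeq_eq_cylinder, PiNat.mem_cylinder_iff_eq.1 hxv]
  exact hvO

lemma cyl_subset_of_prefix {a b : List ℕ} (h : a <+: b) : cyl b ⊆ cyl a := by
  intro q hq
  have hlen : a.length ≤ b.length := h.length_le
  obtain ⟨t, rfl⟩ := h
  have : (restrictSeq q (a ++ t).length).take a.length = (a ++ t).take a.length := by rw [hq]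
  rw [restrictSeq_take q hlen, List.take_left] at this
  exact this

lemma mem_cyl_append {p : ℕ → ℕ} {a : List ℕ} {n : ℕ} :
    p ∈ cyl (a ++ [n]) ↔ p ∈ cyl a ∧ p (a.length) = n := by
  have hl : (a ++ [n]).length = a.length + 1 := by simp
  simp only [cyl, mem_setOf_eq, hl, restrictSeq_succ]
  constructor
  · intro h
    have := List.append_inj' h (by simp)
    simpa using this
  · rintro ⟨h1, h2⟩
    rw [h1, h2]


lemma cyl_nil : cyl ([] : List ℕ) = univ := by
  ext p; simp [cyl, restrictSeq_zero]

lemma cyl_iUnion (a : List ℕ) : cyl a = ⋃ n : ℕ, cyl (a ++ [n]) := by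
  ext p
  simp only [mem_iUnion, mem_cyl_append]
  constructor
  · intro h; exact ⟨p a.length, h, rfl⟩
  · rintro ⟨n, h, -⟩; exact h

lemma cyl_disjoint {a : List ℕ} {n m : ℕ} (h : n ≠ m) : cyl (a ++ [n]) ∩ cyl (a ++ [m]) = ∅ := by
  ext p
  simp only [mem_inter_iff, mem_cyl_append, mem_empty_iff_false, iff_false]
  rintro ⟨⟨-, h1⟩, ⟨-, h2⟩⟩
  exact h (h1 ▸ h2 ▸ rfl)

lemma fruit_cyl (p : ℕ → ℕ) : fruit cyl p = {p} := by
  ext q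
  simp only [fruit, mem_iInter, mem_singleton_iff]
  constructor
  · intro h
    funext i
    have := h (i + 1)
    rw [cyl_restrictSeq_eq_cylinder] at this
    exact PiNat.mem_cylinder_iff.1 this i (Nat.lt_succ_self i)
  · rintro rfl
    exact fun n => mem_cyl_restrictSeq q n

/-- cylinders of longer restrictions are smaller -/
lemma restrictSeq_prefix (p : ℕ → ℕ) {m n : ℕ} (h : m ≤ n) :
    restrictSeq p m <+: restrictSeq p n := by
  rw [← restrictSeq_take p h]
  exact List.take_prefix _ _


section Forward

variable {Y : Type*} (V : List ℕ → Set Y)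

lemma disjoint_of_length_eq (hP : Partitions V univ) :
    ∀ a b : List ℕ, a.length = b.length → a ≠ b → V a ∩ V b = ∅ := by
  intro a
  induction a using List.reverseRecOn with
  | nil =>
    intro b hl hne
    exact absurd (List.eq_nil_of_length_eq_zero hl.symm).symm hne
  | append_singleton as n ih =>
    intro b hl hne
    have hb : b ≠ [] := by rintro rfl; simp at hl
    obtain ⟨bs, m, rfl⟩ : ∃ bs m, b = bs ++ [m] :=
      ⟨b.dropLast, b.getLast hb, (List.dropLast_append_getLast hb).symm⟩
    by_cases hab : as = bs
    · subst hab
      exact hP.2 as n m (fun h => hne (by rw [h]))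
    · have h1 : V (as ++ [n]) ⊆ V as := by
        rw [hP.1.2 as]; exact subset_iUnion (fun k => V (as ++ [k])) n
      have h2 : V (bs ++ [m]) ⊆ V bs := by
        rw [hP.1.2 bs]; exact subset_iUnion (fun k => V (bs ++ [k])) m
      have h3 : V as ∩ V bs = ∅ := ih bs (by simpa using hl) hab
      exact eq_empty_of_subset_empty (h3 ▸ inter_subset_inter h1 h2)

open Classical in
noncomputable def digitF (y : Y) (l : List ℕ) : ℕ :=
  if h : ∃ n, y ∈ V (l ++ [n]) then h.choose else 0

noncomputable def chainF (y : Y) : ℕ → List ℕ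
  | 0 => []
  | k+1 => chainF y k ++ [digitF V y (chainF y k)]

noncomputable def gmap (y : Y) : ℕ → ℕ := fun i => digitF V y (chainF V y i)

lemma restrictSeq_gmap (y : Y) : ∀ n, restrictSeq (gmap V y) n = chainF V y n := by
  intro n
  induction n with
  | zero => rfl
  | succ k ih => rw [restrictSeq_succ, ih]; rfl

lemma mem_chainF (hC : Covers V univ) (y : Y) : ∀ n, y ∈ V (chainF V y n) := by
  intro n
  induction n with
  | zero => rw [show chainF V y 0 = [] from rfl, hC.1]; trivial
  | succ k ih =>
    have h : ∃ m, y ∈ V (chainF V y k ++ [m]) := by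
      have := hC.2 (chainF V y k) ▸ ih
      simpa using this
    show y ∈ V (chainF V y k ++ [digitF V y (chainF V y k)])
    classical
    rw [digitF, dif_pos h]
    exact h.choose_spec

lemma mem_V_restrict_gmap (hC : Covers V univ) (y : Y) (n : ℕ) :
    y ∈ V (restrictSeq (gmap V y) n) := by
  rw [restrictSeq_gmap]; exact mem_chainF V hC y n

lemma mem_fruit_gmap (hC : Covers V univ) (y : Y) : y ∈ fruit V (gmap V y) :=
  mem_iInter.2 (mem_V_restrict_gmap V hC y)

lemma gmap_preimage_cyl (hP : Partitions V univ) (b : List ℕ) :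
    gmap V ⁻¹' cyl b = V b := by
  ext y
  simp only [mem_preimage, cyl, mem_setOf_eq]
  constructor
  · intro h
    have := mem_V_restrict_gmap V hP.1 y b.length
    rwa [h] at this
  · intro h
    by_contra hne
    have h2 := mem_V_restrict_gmap V hP.1 y b.length
    have h3 := disjoint_of_length_eq V hP (restrictSeq (gmap V y) b.length) b
      (length_restrictSeq _ _) hne
    exact absurd (mem_inter h2 h) (by rw [h3]; exact fun h => h)

lemma gmap_eq_of_mem_fruit (hP : Partitions V univ) {x : Y} {p : ℕ → ℕ}
    (hx : x ∈ fruit V p) : gmap V x = p := by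
  have key : ∀ n, restrictSeq (gmap V x) n = restrictSeq p n := by
    intro n
    by_contra hne
    have h1 := mem_V_restrict_gmap V hP.1 x n
    have h2 : x ∈ V (restrictSeq p n) := mem_iInter.1 hx n
    have h3 := disjoint_of_length_eq V hP _ _
      ((length_restrictSeq _ _).trans (length_restrictSeq p n).symm) hne
    exact absurd (mem_inter h1 h2) (by rw [h3]; exact fun h => h)
  funext i
  exact restrictSeq_eq_iff.1 (key (i+1)) i (Nat.lt_succ_self i)

lemma gmap_bijective (hP : Partitions V univ) (hS : StrictBranches V) :
    Function.Bijective (gmap V) := by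
  constructor
  · intro y y' h
    obtain ⟨z, hz⟩ := hS (gmap V y)
    have h1 : y ∈ fruit V (gmap V y) := mem_fruit_gmap V hP.1 y
    have h2 : y' ∈ fruit V (gmap V y) := h ▸ mem_fruit_gmap V hP.1 y'
    rw [hz, mem_singleton_iff] at h1 h2
    rw [h1, h2]
  · intro p
    obtain ⟨x, hx⟩ := hS p
    exact ⟨x, gmap_eq_of_mem_fruit V hP (hx ▸ mem_singleton x)⟩

variable [TopologicalSpace Y]

lemma gmap_continuous (hO : OpenScheme V) (hP : Partitions V univ) :
    Continuous (gmap V) := by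
  rw [(PiNat.isTopologicalBasis_cylinders (fun _ : ℕ => ℕ)).continuous_iff]
  rintro s ⟨x, n, rfl⟩
  rw [← cyl_restrictSeq_eq_cylinder, gmap_preimage_cyl V hP]
  exact hO _

lemma gmap_image_V (hP : Partitions V univ) (hS : StrictBranches V) (a : List ℕ) :
    gmap V '' V a = cyl a := by
  apply Subset.antisymm
  · rintro - ⟨y, hy, rfl⟩
    rw [← gmap_preimage_cyl V hP] at hy
    exact hy
  · intro p hp
    obtain ⟨x, hx⟩ := (gmap_bijective V hP hS).2 p
    refine ⟨x, ?_, hx⟩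
    rw [← gmap_preimage_cyl V hP, mem_preimage, hx]
    exact hp

lemma gmap_quasiOpen (hO : OpenScheme V) (hP : Partitions V univ) (hS : StrictBranches V)
    (hB : IsPiBase {S : Set Y | ∃ a : List ℕ, S = V a}) :
    IsQuasiOpen (gmap V) := by
  intro U hU hne
  obtain ⟨G, ⟨a, rfl⟩, hGU⟩ := hB.2 U hU hne
  have h1 : cyl a ⊆ gmap V '' U := by
    rw [← gmap_image_V V hP hS]
    exact image_mono hGU
  have h2 : cyl a ⊆ interior (gmap V '' U) :=
    (isOpen_cyl a).subset_interior_iff.2 h1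
  exact ⟨extFun a, h2 (extFun_mem_cyl a)⟩

end Forward

lemma split_lemma {P : Type*} [MetricSpace P] [SecondCountableTopology P]
    {V : Set P} (hV : IsOpen V) (hne : V.Nonempty) {ε : ℝ} (hε : 0 < ε) :
    ∃ u : ℕ → Set P,
      (∀ n, IsOpen (u n) ∧ (u n).Nonempty ∧ closure (u n) ⊆ V ∧ ∃ c, u n ⊆ ball c ε) ∧
      (⋃ n, u n) = V := by
  have key : ∀ y : V, ∃ r : ℝ, 0 < r ∧ r < ε ∧ closure (ball (y : P) r) ⊆ V := by
    rintro ⟨y, hy⟩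
    obtain ⟨δ, hδ, hδV⟩ := Metric.isOpen_iff.1 hV y hy
    refine ⟨min (δ/2) (ε/2), by positivity, lt_of_le_of_lt (min_le_right _ _) (by linarith), ?_⟩
    refine (closure_ball_subset_closedBall).trans ((closedBall_subset_ball ?_).trans hδV)
    exact lt_of_le_of_lt (min_le_left _ _) (by linarith)
  choose r hr0 hrε hrV using key
  have hcover : ⋃ y : V, ball (y : P) (r y) = V := by
    apply Subset.antisymm
    · exact iUnion_subset fun y => (subset_closure.trans (hrV y))
    · intro x hx
      exact mem_iUnion.2 ⟨⟨x, hx⟩, mem_ball_self (hr0 ⟨x, hx⟩)⟩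
  obtain ⟨T, hTc, hTU⟩ := TopologicalSpace.isOpen_iUnion_countable
    (fun y : V => ball (y : P) (r y)) (fun y => isOpen_ball)
  have hTne : T.Nonempty := by
    rcases hne with ⟨x, hx⟩
    by_contra h
    rw [not_nonempty_iff_eq_empty] at h
    rw [h] at hTU
    rw [hcover] at hTU
    rw [← hTU] at hx
    simpa using hx
  obtain ⟨e, he⟩ := hTc.exists_eq_range hTne
  refine ⟨fun n => ball ((e n : V) : P) (r (e n)), fun n => ⟨isOpen_ball,
    ⟨_, mem_ball_self (hr0 _)⟩, hrV _, ⟨_, ball_subset_ball (le_of_lt (hrε _))⟩⟩, ?_⟩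
  rw [he, biUnion_range] at hTU
  rw [hTU, hcover]


section Scheme
variable {P : Type*} [MetricSpace P] [SecondCountableTopology P] [Nonempty P]

open Classical in
noncomputable def childrenS (V : Set P) (ε : ℝ) : ℕ → Set P :=
  if h : IsOpen V ∧ V.Nonempty ∧ 0 < ε then (split_lemma h.1 h.2.1 h.2.2).choose
  else fun _ => V

lemma childrenS_spec {V : Set P} {ε : ℝ} (h1 : IsOpen V) (h2 : V.Nonempty) (h3 : 0 < ε) :
    (∀ n, IsOpen (childrenS V ε n) ∧ (childrenS V ε n).Nonempty ∧
      closure (childrenS V ε n) ⊆ V ∧ ∃ c, childrenS V ε n ⊆ ball c ε) ∧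
    (⋃ n, childrenS V ε n) = V := by
  have h : IsOpen V ∧ V.Nonempty ∧ 0 < ε := ⟨h1, h2, h3⟩
  have heq : childrenS V ε = (split_lemma h.1 h.2.1 h.2.2).choose := by
    rw [childrenS, dif_pos h]
  rw [heq]
  exact (split_lemma h.1 h.2.1 h.2.2).choose_spec

noncomputable def WS : List ℕ → Set P
  | [] => univ
  | n :: a => childrenS (WS a) ((1/2 : ℝ) ^ a.length) n

lemma WS_open_nonempty : ∀ a : List ℕ, IsOpen (WS (P := P) a) ∧ (WS (P := P) a).Nonempty := by
  intro a
  induction a with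
  | nil => exact ⟨isOpen_univ, univ_nonempty⟩
  | cons n a ih =>
    have h := childrenS_spec ih.1 ih.2 (pow_pos (by norm_num : (0:ℝ) < 1/2) a.length)
    exact ⟨(h.1 n).1, (h.1 n).2.1⟩

lemma WS_spec (n : ℕ) (a : List ℕ) :
    closure (WS (P := P) (n :: a)) ⊆ WS a ∧ (∃ c, WS (P := P) (n :: a) ⊆ ball c ((1/2:ℝ)^a.length))
      ∧ (⋃ m, WS (P := P) (m :: a)) = WS a := by
  have h := childrenS_spec (WS_open_nonempty (P := P) a).1 (WS_open_nonempty (P := P) a).2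
    (pow_pos (by norm_num : (0:ℝ) < 1/2) a.length)
  exact ⟨(h.1 n).2.2.1, (h.1 n).2.2.2, h.2⟩

/-- The scheme indexed the usual way. -/
noncomputable def Wsch (a : List ℕ) : Set P := WS a.reverse

lemma Wsch_nil : Wsch (P := P) [] = univ := rfl

lemma Wsch_append (a : List ℕ) (n : ℕ) : Wsch (P := P) (a ++ [n]) = WS (n :: a.reverse) := by
  rw [Wsch, List.reverse_append]
  rfl

lemma Wsch_isOpen (a : List ℕ) : IsOpen (Wsch (P := P) a) := (WS_open_nonempty (P := P) _).1

lemma Wsch_nonempty (a : List ℕ) : (Wsch (P := P) a).Nonempty := (WS_open_nonempty (P := P) _).2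

lemma Wsch_closure (a : List ℕ) (n : ℕ) : closure (Wsch (P := P) (a ++ [n])) ⊆ Wsch a := by
  rw [Wsch_append]
  exact (WS_spec n a.reverse).1

lemma Wsch_ball (a : List ℕ) (n : ℕ) :
    ∃ c, Wsch (P := P) (a ++ [n]) ⊆ ball c ((1/2:ℝ)^a.length) := by
  rw [Wsch_append]
  have := (WS_spec (P := P) n a.reverse).2.1
  rwa [List.length_reverse] at this

lemma Wsch_iUnion (a : List ℕ) : (⋃ n, Wsch (P := P) (a ++ [n])) = Wsch a := by
  have := (WS_spec (P := P) 0 a.reverse).2.2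
  rw [Wsch, ← this]
  exact iUnion_congr fun n => Wsch_append a n

lemma Wsch_child_subset (a : List ℕ) (n : ℕ) : Wsch (P := P) (a ++ [n]) ⊆ Wsch a :=
  subset_closure.trans (Wsch_closure a n)

lemma Wsch_append_subset (t a : List ℕ) : Wsch (P := P) (a ++ t) ⊆ Wsch a := by
  induction t using List.reverseRecOn with
  | nil => simp [Subset.rfl]
  | append_singleton t m ih =>
    rw [← List.append_assoc]
    exact (Wsch_child_subset (a ++ t) m).trans ih

lemma Wsch_prefix_subset {a b : List ℕ} (h : a <+: b) : Wsch (P := P) b ⊆ Wsch a := by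
  obtain ⟨t, rfl⟩ := h
  exact Wsch_append_subset t a

lemma Wsch_restrict_mono (p : ℕ → ℕ) {m n : ℕ} (h : m ≤ n) :
    Wsch (P := P) (restrictSeq p n) ⊆ Wsch (restrictSeq p m) :=
  Wsch_prefix_subset (restrictSeq_prefix p h)

lemma Wsch_restrict_ball (p : ℕ → ℕ) (n : ℕ) :
    ∃ c, Wsch (P := P) (restrictSeq p (n + 1)) ⊆ ball c ((1/2:ℝ)^n) := by
  have := Wsch_ball (P := P) (restrictSeq p n) (p n)
  rw [← restrictSeq_succ, length_restrictSeq] at this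
  exact this

end Scheme

section Limit
variable {P : Type*} [MetricSpace P] [SecondCountableTopology P] [CompleteSpace P] [Nonempty P]

noncomputable def pickW (p : ℕ → ℕ) (n : ℕ) : P := (Wsch_nonempty (P := P) (restrictSeq p n)).choose

lemma pickW_mem (p : ℕ → ℕ) (n : ℕ) : pickW (P := P) p n ∈ Wsch (restrictSeq p n) :=
  (Wsch_nonempty (P := P) (restrictSeq p n)).choose_spec

lemma dist_lt_of_mem_Wsch {p : ℕ → ℕ} {n : ℕ} {x y : P}
    (hx : x ∈ Wsch (restrictSeq p (n+1))) (hy : y ∈ Wsch (restrictSeq p (n+1))) :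
    dist x y < 2 * (1/2:ℝ)^n := by
  obtain ⟨c, hc⟩ := Wsch_restrict_ball (P := P) p n
  have h1 := mem_ball.1 (hc hx)
  have h2 := mem_ball.1 (hc hy)
  calc dist x y ≤ dist x c + dist y c := dist_triangle_right x y c
    _ < (1/2:ℝ)^n + (1/2:ℝ)^n := add_lt_add h1 h2
    _ = 2 * (1/2:ℝ)^n := by ring

lemma pickW_cauchy (p : ℕ → ℕ) : CauchySeq (pickW (P := P) p) := by
  apply Metric.cauchySeq_iff'.2
  intro ε hε
  obtain ⟨k, hk⟩ : ∃ k : ℕ, (1/2:ℝ)^k < ε/2 :=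
    exists_pow_lt_of_lt_one (by linarith) (by norm_num)
  refine ⟨k + 1, fun n hn => ?_⟩
  have h1 : pickW (P := P) p n ∈ Wsch (restrictSeq p (k+1)) :=
    Wsch_restrict_mono p hn (pickW_mem (P := P) p n)
  have h2 := pickW_mem (P := P) p (k+1)
  have := dist_lt_of_mem_Wsch h1 h2
  linarith

noncomputable def hmap (p : ℕ → ℕ) : P :=
  (cauchySeq_tendsto_of_complete (pickW_cauchy (P := P) p)).choose

lemma hmap_tendsto (p : ℕ → ℕ) :
    Filter.Tendsto (pickW (P := P) p) Filter.atTop (nhds (hmap (P := P) p)) :=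
  (cauchySeq_tendsto_of_complete (pickW_cauchy (P := P) p)).choose_spec

lemma hmap_mem (p : ℕ → ℕ) (n : ℕ) : hmap (P := P) p ∈ Wsch (restrictSeq p n) := by
  apply Wsch_closure (restrictSeq p n) (p n)
  rw [← restrictSeq_succ]
  apply mem_closure_of_tendsto (hmap_tendsto p)
  filter_upwards [Filter.eventually_ge_atTop (n + 1)] with m hm
  exact Wsch_restrict_mono p hm (pickW_mem p m)

lemma hmap_unique {p : ℕ → ℕ} {x : P} (hx : ∀ n, x ∈ Wsch (restrictSeq p n)) :
    x = hmap p := by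
  have key : ∀ k : ℕ, dist x (hmap p) < 2 * (1/2:ℝ)^k :=
    fun k => dist_lt_of_mem_Wsch (hx (k+1)) (hmap_mem p (k+1))
  by_contra hne
  have hpos : 0 < dist x (hmap p) := dist_pos.2 hne
  obtain ⟨k, hk⟩ : ∃ k : ℕ, (1/2:ℝ)^k < dist x (hmap p) / 2 :=
    exists_pow_lt_of_lt_one (by linarith) (by norm_num)
  have := key k
  linarith


open Classical in
noncomputable def digitW (x : P) (l : List ℕ) : ℕ :=
  if h : ∃ n, x ∈ Wsch (l ++ [n]) then h.choose else 0

noncomputable def chainW (x : P) (a : List ℕ) : ℕ → List ℕ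
  | 0 => a
  | k+1 => chainW x a k ++ [digitW x (chainW x a k)]

lemma mem_chainW {x : P} {a : List ℕ} (hx : x ∈ Wsch a) : ∀ k, x ∈ Wsch (chainW x a k) := by
  intro k
  induction k with
  | zero => exact hx
  | succ k ih =>
    have h : ∃ n, x ∈ Wsch (chainW x a k ++ [n]) := by
      have := (Wsch_iUnion (P := P) (chainW x a k)) ▸ ih
      simpa using this
    show x ∈ Wsch (chainW x a k ++ [digitW x (chainW x a k)])
    classical
    rw [digitW, dif_pos h]
    exact h.choose_spec

noncomputable def extW (x : P) (a : List ℕ) : ℕ → ℕ := fun i =>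
  if i < a.length then a.getD i 0 else digitW x (chainW x a (i - a.length))

lemma restrictSeq_extW_base (x : P) (a : List ℕ) : restrictSeq (extW x a) a.length = a := by
  have h : ∀ i < a.length, extW x a i = extFun a i := by
    intro i hi
    simp [extW, extFun, if_pos hi]
  have := restrictSeq_eq_iff.2 h
  rw [this, restrictSeq_extFun]

lemma restrictSeq_extW (x : P) (a : List ℕ) :
    ∀ k, restrictSeq (extW x a) (a.length + k) = chainW x a k := by
  intro k
  induction k with
  | zero => exact restrictSeq_extW_base x a
  | succ k ih =>
    rw [show a.length + (k+1) = (a.length + k) + 1 from rfl, restrictSeq_succ, ih]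
    congr 1
    have h1 : ¬ (a.length + k < a.length) := by omega
    have h2 : a.length + k - a.length = k := by omega
    simp [extW, h1, h2]

lemma mem_Wsch_extW {x : P} {a : List ℕ} (hx : x ∈ Wsch a) (n : ℕ) :
    x ∈ Wsch (restrictSeq (extW x a) n) := by
  rcases le_or_gt n a.length with h | h
  · have heq : restrictSeq (extW x a) n = a.take n := by
      rw [← restrictSeq_take (extW x a) h, restrictSeq_extW_base]
    rw [heq]
    exact Wsch_prefix_subset (List.take_prefix n a) hx
  · obtain ⟨k, rfl⟩ := Nat.exists_eq_add_of_le h.le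
    rw [restrictSeq_extW]
    exact mem_chainW hx k

lemma hmap_image_cyl (a : List ℕ) : hmap (P := P) '' cyl a = Wsch a := by
  apply Subset.antisymm
  · rintro - ⟨p, hp, rfl⟩
    have : restrictSeq p a.length = a := hp
    exact this ▸ hmap_mem p a.length
  · intro x hx
    refine ⟨extW x a, restrictSeq_extW_base x a, ?_⟩
    exact (hmap_unique (mem_Wsch_extW hx)).symm

lemma hmap_surjective : Function.Surjective (hmap (P := P)) := by
  intro x
  have hx : x ∈ Wsch (P := P) [] := by rw [Wsch_nil]; trivial
  exact ⟨extW x [], (hmap_unique (mem_Wsch_extW hx)).symm⟩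

lemma hmap_continuous : Continuous (hmap (P := P)) := by
  rw [continuous_iff_continuousAt]
  intro p
  rw [ContinuousAt, Metric.tendsto_nhds]
  intro ε hε
  obtain ⟨k, hk⟩ : ∃ k : ℕ, (1/2:ℝ)^k < ε/2 :=
    exists_pow_lt_of_lt_one (by linarith) (by norm_num)
  have hcyl : cyl (restrictSeq p (k+1)) ∈ nhds p :=
    (isOpen_cyl _).mem_nhds (mem_cyl_restrictSeq p (k+1))
  filter_upwards [hcyl] with q hq
  have heq : restrictSeq q (k+1) = restrictSeq p (k+1) := by
    simpa [cyl, length_restrictSeq] using hq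
  have h1 : hmap (P := P) q ∈ Wsch (restrictSeq p (k+1)) := heq ▸ hmap_mem q (k+1)
  have := dist_lt_of_mem_Wsch h1 (hmap_mem p (k+1))
  linarith

lemma hmap_isOpenMap : IsOpenMap (hmap (P := P)) := by
  intro O hO
  rw [isOpen_iff_forall_mem_open]
  rintro y ⟨p, hp, rfl⟩
  obtain ⟨n, hn⟩ := cyl_basis hO hp
  exact ⟨Wsch (restrictSeq p n), by rw [← hmap_image_cyl]; exact image_mono hn,
    Wsch_isOpen _, hmap_mem p n⟩

end Limit

theorem polish_exists_openMap (P : Type*) [TopologicalSpace P] [PolishSpace P] [Nonempty P] :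
    ∃ h : (ℕ → ℕ) → P, Continuous h ∧ IsOpenMap h ∧ Function.Surjective h := by
  letI := TopologicalSpace.upgradeIsCompletelyMetrizable P
  exact ⟨hmap, hmap_continuous, hmap_isOpenMap, hmap_surjective⟩



section Backward

variable {X : Type*} [TopologicalSpace X] {Y : Type*} [TopologicalSpace Y] [Nonempty Y]
  {P : Type*} [TopologicalSpace P]

lemma invFun_image {g : Y → P} (hg : Function.Bijective g) (S : Set P) :
    Function.invFun g '' S = g ⁻¹' S := by
  ext y
  constructor
  · rintro ⟨s, hs, rfl⟩
    rw [mem_preimage, Function.rightInverse_invFun hg.2 s]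
    exact hs
  · intro hy
    exact ⟨g y, hy, Function.leftInverse_invFun hg.1 y⟩

/-- The composed map of the backward direction. -/
noncomputable def phiMap (f : Y → X) (g : Y → P) (h : (ℕ → ℕ) → P) : (ℕ → ℕ) → X :=
  fun p => f (Function.invFun g (h p))

variable {f : Y → X} {g : Y → P} {h : (ℕ → ℕ) → P}

lemma sigma_isOpen_preimage {U : Set X} (hU : IsOpen U) :
    IsOpen[sigmaTop (phiMap f g h)] ((phiMap f g h) ⁻¹' U) :=
  TopologicalSpace.GenerateOpen.basic _ (Or.inl ⟨U, hU, rfl⟩)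

lemma sigma_isOpen_cyl (a : List ℕ) : IsOpen[sigmaTop (phiMap f g h)] (cyl a) :=
  TopologicalSpace.GenerateOpen.basic _ (Or.inr ⟨a, rfl⟩)

lemma sigma_basis {O : Set (ℕ → ℕ)} (hO : IsOpen[sigmaTop (phiMap f g h)] O)
    {p : ℕ → ℕ} (hp : p ∈ O) :
    ∃ (a : List ℕ) (U : Set X), IsOpen U ∧ p ∈ cyl a ∩ (phiMap f g h) ⁻¹' U ∧
      cyl a ∩ (phiMap f g h) ⁻¹' U ⊆ O := by
  have hO' : TopologicalSpace.GenerateOpen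
      ({S : Set (ℕ → ℕ) | ∃ U : Set X, IsOpen U ∧ S = (phiMap f g h) ⁻¹' U} ∪
        {S : Set (ℕ → ℕ) | ∃ a : List ℕ, S = cyl a}) O := hO
  clear hO
  induction hO' with
  | basic S hS =>
    rcases hS with ⟨U, hU, rfl⟩ | ⟨a, rfl⟩
    · refine ⟨[], U, hU, ⟨?_, hp⟩, inter_subset_right⟩
      rw [cyl_nil]; trivial
    · exact ⟨a, univ, isOpen_univ, ⟨hp, trivial⟩, inter_subset_left⟩
  | univ => exact ⟨[], univ, isOpen_univ, ⟨by rw [cyl_nil]; trivial, trivial⟩, by simp⟩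
  | inter O₁ O₂ h₁ h₂ ih₁ ih₂ =>
    obtain ⟨a₁, U₁, hU₁, hm₁, hs₁⟩ := ih₁ hp.1
    obtain ⟨a₂, U₂, hU₂, hm₂, hs₂⟩ := ih₂ hp.2
    set m := max a₁.length a₂.length with hm
    have key : ∀ (a : List ℕ), p ∈ cyl a → a.length ≤ m → cyl (restrictSeq p m) ⊆ cyl a := by
      intro a hpa hle
      have : a = restrictSeq p a.length := hpa.symm
      rw [this]
      exact cyl_subset_of_prefix (restrictSeq_prefix p hle)
    refine ⟨restrictSeq p m, U₁ ∩ U₂, hU₁.inter hU₂,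
      ⟨mem_cyl_restrictSeq p m, hm₁.2, hm₂.2⟩, ?_⟩
    intro r hr
    exact ⟨hs₁ ⟨key a₁ hm₁.1 (le_max_left _ _) hr.1, hr.2.1⟩,
      hs₂ ⟨key a₂ hm₂.1 (le_max_right _ _) hr.1, hr.2.2⟩⟩
  | sUnion 𝒮 hS ih =>
    obtain ⟨t, ht, hpt⟩ := hp
    obtain ⟨a, U, hU, hm, hs⟩ := ih t ht hpt
    exact ⟨a, U, hU, hm, hs.trans (subset_sUnion_of_mem ht)⟩

lemma phi_continuous : Continuous[sigmaTop (phiMap f g h), _] (phiMap f g h) := by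
  rw [continuous_def]
  exact fun U hU => sigma_isOpen_preimage hU

lemma phi_image_cyl (hg : Function.Bijective g) (a : List ℕ) :
    phiMap f g h '' cyl a = f '' (g ⁻¹' (h '' cyl a)) := by
  rw [show phiMap f g h = (f ∘ Function.invFun g) ∘ h from rfl, image_comp, image_comp,
    invFun_image hg]

lemma phi_image_cyl_isOpen (hg : Function.Bijective g) (hgc : Continuous g)
    (hfo : IsOpenMap f) (hho : IsOpenMap h) (a : List ℕ) :
    IsOpen (phiMap f g h '' cyl a) := by
  rw [phi_image_cyl hg]
  exact hfo _ (hgc.isOpen_preimage _ (hho _ (isOpen_cyl a)))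

lemma phi_isOpenMap (hg : Function.Bijective g) (hgc : Continuous g)
    (hfo : IsOpenMap f) (hho : IsOpenMap h) :
    @IsOpenMap _ _ (sigmaTop (phiMap f g h)) _ (phiMap f g h) := by
  intro O hO
  rw [isOpen_iff_forall_mem_open]
  rintro y ⟨p, hp, rfl⟩
  obtain ⟨a, U, hU, hm, hs⟩ := sigma_basis hO hp
  refine ⟨phiMap f g h '' cyl a ∩ U, ?_, (phi_image_cyl_isOpen hg hgc hfo hho a).inter hU,
    ⟨⟨p, hm.1, rfl⟩, hm.2⟩⟩
  rw [← image_inter_preimage]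
  exact image_mono hs

lemma phi_surjective (hg : Function.Bijective g) (hfs : Function.Surjective f)
    (hhs : Function.Surjective h) : Function.Surjective (phiMap f g h) := by
  intro x
  obtain ⟨y, rfl⟩ := hfs x
  obtain ⟨p, hp⟩ := hhs (g y)
  refine ⟨p, ?_⟩
  show f (Function.invFun g (h p)) = f y
  rw [hp, Function.leftInverse_invFun hg.1 y]

lemma sigma_pibase (hg : Function.Bijective g) (hgc : Continuous g) (hgq : IsQuasiOpen g)
    (hfc : Continuous f) (hhc : Continuous h) (hho : IsOpenMap h)
    {O : Set (ℕ → ℕ)} (hO : IsOpen[sigmaTop (phiMap f g h)] O) (hne : O.Nonempty) :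
    ∃ a : List ℕ, cyl a ⊆ O := by
  obtain ⟨p, hp⟩ := hne
  obtain ⟨b, U, hU, hm, hs⟩ := sigma_basis hO hp
  set A := f ⁻¹' U with hA
  have hy₀ : Function.invFun g (h p) ∈ A := hm.2
  have hgy₀ : g (Function.invFun g (h p)) = h p := Function.rightInverse_invFun hg.2 (h p)
  set A'' := A ∩ g ⁻¹' (h '' cyl b) with hA''
  have hA''open : IsOpen A'' :=
    (hfc.isOpen_preimage _ hU).inter (hgc.isOpen_preimage _ (hho _ (isOpen_cyl b)))
  have hA''ne : A''.Nonempty :=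
    ⟨Function.invFun g (h p), hy₀, by rw [mem_preimage, hgy₀]; exact ⟨p, hm.1, rfl⟩⟩
  obtain ⟨z, hz⟩ := hgq A'' hA''open hA''ne
  have hz' : z ∈ g '' A'' := interior_subset hz
  obtain ⟨y₁, hy₁, hgy₁⟩ := hz'
  obtain ⟨q, hq, hhq⟩ := hy₁.2
  have hqO' : q ∈ h ⁻¹' (interior (g '' A'')) ∩ cyl b :=
    ⟨by rw [mem_preimage, hhq, hgy₁]; exact hz, hq⟩
  obtain ⟨n, hn⟩ := cyl_basis
    ((hhc.isOpen_preimage _ isOpen_interior).inter (isOpen_cyl b)) hqO'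
  refine ⟨restrictSeq q n, fun r hr => ?_⟩
  have hrO' := hn hr
  apply hs
  refine ⟨hrO'.2, ?_⟩
  have : h r ∈ g '' A'' := interior_subset hrO'.1
  obtain ⟨y₂, hy₂, hgy₂⟩ := this
  show phiMap f g h r ∈ U
  have : Function.invFun g (h r) = y₂ := by
    rw [← hgy₂, Function.leftInverse_invFun hg.1 y₂]
  show f (Function.invFun g (h r)) ∈ U
  rw [this]
  exact hy₂.1

end Backward


/-- A nonempty space X is a continuous open image of a π-space iff X is a
continuous open image of a space Y admitting a continuous quasi-open bijection onto some
Polish space. -/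
theorem statement8 {X : Type} [TopologicalSpace X] [Nonempty X] :
    IsContinuousOpenImageOfPiSpace X ↔
    ∃ (Y : Type) (_ : TopologicalSpace Y) (f : Y → X),
      Continuous f ∧ IsOpenMap f ∧ Function.Surjective f ∧
      ∃ (P : Type) (_ : TopologicalSpace P), PolishSpace P ∧
        ∃ g : Y → P, Function.Bijective g ∧ Continuous g ∧ IsQuasiOpen g := by
  constructor
  · rintro ⟨Y, tY, f, ⟨V, hO, hP, hS, hB⟩, hfc, hfo, hfs⟩
    exact ⟨Y, tY, f, hfc, hfo, hfs, (ℕ → ℕ), inferInstance, inferInstance,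
      gmap V, gmap_bijective V hP hS, gmap_continuous V hO hP, gmap_quasiOpen V hO hP hS hB⟩
  · rintro ⟨Y, tY, f, hfc, hfo, hfs, P, tP, hPol, g, hgbij, hgc, hgq⟩
    haveI : Nonempty Y := ⟨(hfs (Classical.arbitrary X)).choose⟩
    haveI : Nonempty P := Nonempty.map g inferInstance
    obtain ⟨h, hhc, hho, hhs⟩ := polish_exists_openMap P
    refine ⟨(ℕ → ℕ), sigmaTop (phiMap f g h), phiMap f g h, ?_, ?_, ?_, ?_⟩
    · refine ⟨cyl, fun a => sigma_isOpen_cyl a, ⟨⟨cyl_nil, cyl_iUnion⟩, fun a n m hnm =>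
        cyl_disjoint hnm⟩, fun p => ⟨p, fruit_cyl p⟩, ?_⟩
      constructor
      · rintro G ⟨a, rfl⟩
        exact ⟨sigma_isOpen_cyl a, cyl_nonempty a⟩
      · intro U hU hne
        obtain ⟨a, ha⟩ := sigma_pibase hgbij hgc hgq hfc hhc hho hU hne
        exact ⟨cyl a, ⟨a, rfl⟩, ha⟩
    · exact phi_continuous
    · exact phi_isOpenMap hgbij hgc hfo hho
    · exact phi_surjective hgbij hfs hhs
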